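/- arXiv:0909.0569 — 3 statements merged into one kernel-verified Lean document; each statement's English description precedes it below -/
import Mathlib

section
/- Let M be a topological abelian monoid with the cancellation property and let N ⊆ M be a submonoid. Suppose that the quotient monoid M/N (with the quotient topology) is a topological abelian monoid, that the naive group completion M⁺ is a topological group, and that the subgroup N⁺ = { q(n, n′) : n, n′ ∈ N } of M⁺ is closed. Then the canonical group isomorphism (M/N)⁺ → M⁺/N⁺ (induced by the quotient maps M → M/N and M⁺ → M⁺/N⁺) is an isomorphism of topological groups, i.e., a group isomorphism that is also a homeomorphism. -/
universe u

/-- The generating relation for the naive group completion of a topological abelian monoid: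
`(a, b) ∼ (m + a, m + b)` for all `m`. -/
def gcRel (M : Type u) [AddCommMonoid M] : M × M → M × M → Prop :=
  fun p q => ∃ m : M, q.1 = m + p.1 ∧ q.2 = m + p.2

/-- The naive group completion `M⁺` of an abelian monoid `M`: the quotient of `M × M` by the
equivalence relation generated by the diagonal translation action of `M`. -/
def GC (M : Type u) [AddCommMonoid M] : Type u := Quot (gcRel M)

namespace GC

variable {M : Type u} [AddCommMonoid M]

/-- `q(a, b)`, the class of `(a, b)` in the naive group completion. -/
def mk (p : M × M) : GC M := Quot.mk _ p

instance [TopologicalSpace M] : TopologicalSpace (GC M) :=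
  inferInstanceAs (TopologicalSpace (Quot (gcRel M)))

protected def add : GC M → GC M → GC M :=
  Quot.map₂ (fun p q => (p.1 + q.1, p.2 + q.2))
    (fun p q q' h => by
      obtain ⟨m, h1, h2⟩ := h
      refine ⟨m, ?_, ?_⟩
      · show p.1 + q'.1 = m + (p.1 + q.1)
        rw [h1]; exact add_left_comm _ _ _
      · show p.2 + q'.2 = m + (p.2 + q.2)
        rw [h2]; exact add_left_comm _ _ _)
    (fun p p' q h => by
      obtain ⟨m, h1, h2⟩ := h
      refine ⟨m, ?_, ?_⟩
      · show p'.1 + q.1 = m + (p.1 + q.1)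
        rw [h1]; exact add_assoc _ _ _
      · show p'.2 + q.2 = m + (p.2 + q.2)
        rw [h2]; exact add_assoc _ _ _)

protected def neg : GC M → GC M :=
  Quot.map (fun p => (p.2, p.1)) (fun _ _ h => by
    obtain ⟨m, h1, h2⟩ := h
    exact ⟨m, h2, h1⟩)

instance : Zero (GC M) := ⟨GC.mk (0, 0)⟩
instance : Add (GC M) := ⟨GC.add⟩
instance : Neg (GC M) := ⟨GC.neg⟩

instance : AddCommGroup (GC M) where
  add := (· + ·)
  zero := 0
  neg := (- ·)
  add_assoc := by
    rintro ⟨p⟩ ⟨q⟩ ⟨s⟩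
    exact congrArg (Quot.mk _) (by simp [add_assoc])
  zero_add := by
    rintro ⟨p⟩
    exact congrArg (Quot.mk _) (by simp)
  add_zero := by
    rintro ⟨p⟩
    exact congrArg (Quot.mk _) (by simp)
  add_comm := by
    rintro ⟨p⟩ ⟨q⟩
    exact congrArg (Quot.mk _) (by simp [add_comm])
  neg_add_cancel := by
    rintro ⟨p⟩
    exact (Quot.sound ⟨p.2 + p.1, (add_zero _).symm, by rw [add_zero, add_comm]⟩).symm
  nsmul := nsmulRec
  nsmul_zero := fun _ => rfl
  nsmul_succ := fun _ _ => rfl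
  zsmul := zsmulRec
  zsmul_zero' := fun _ => rfl
  zsmul_succ' := fun _ _ => rfl
  zsmul_neg' := fun _ _ => rfl

@[simp] theorem mk_add (p q : M × M) : mk p + mk q = mk (p.1 + q.1, p.2 + q.2) := rfl

@[simp] theorem mk_neg (p : M × M) : -(mk p) = mk (p.2, p.1) := rfl

/-- The map on the naive group completion induced by a monoid endomorphism. -/
def map (σ : M →+ M) : GC M → GC M :=
  Quot.map (fun p => (σ p.1, σ p.2)) (fun p q h => by
    obtain ⟨m, h1, h2⟩ := h
    refine ⟨σ m, ?_, ?_⟩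
    · show σ q.1 = σ m + σ p.1
      rw [h1, map_add]
    · show σ q.2 = σ m + σ p.2
      rw [h2, map_add])

@[simp] theorem map_mk (σ : M →+ M) (p : M × M) : map σ (mk p) = mk (σ p.1, σ p.2) := rfl

theorem map_add' (σ : M →+ M) (x y : GC M) : map σ (x + y) = map σ x + map σ y := by
  rcases x with ⟨p⟩; rcases y with ⟨q⟩
  exact congrArg (Quot.mk _) (by simp)

theorem map_zero' (σ : M →+ M) : map σ (0 : GC M) = 0 :=
  congrArg (Quot.mk _) (by simp)

theorem map_neg' (σ : M →+ M) (x : GC M) : map σ (-x) = -(map σ x) := by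
  rcases x with ⟨p⟩
  rfl

end GC

/-- The congruence relation on `M` induced by a submonoid `N`: `a ∼ b` iff there are
`n, n' ∈ N` with `a + n = b + n'`; the quotient is the quotient monoid `M/N`. -/
def modCon {M : Type u} [AddCommMonoid M] (N : AddSubmonoid M) : AddCon M where
  r a b := ∃ n ∈ N, ∃ n' ∈ N, a + n = b + n'
  iseqv :=
    { refl := fun _ => ⟨0, N.zero_mem, 0, N.zero_mem, rfl⟩
      symm := fun h => by
        obtain ⟨n, hn, n', hn', h⟩ := h
        exact ⟨n', hn', n, hn, h.symm⟩
      trans := fun h h' => by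
        obtain ⟨n, hn, n', hn', h1⟩ := h
        obtain ⟨m, hm, m', hm', h2⟩ := h'
        refine ⟨n + m, N.add_mem hn hm, m' + n', N.add_mem hm' hn', ?_⟩
        rw [← add_assoc, h1, add_right_comm, h2, add_assoc] }
  add' := fun h h' => by
    obtain ⟨n, hn, n', hn', h1⟩ := h
    obtain ⟨m, hm, m', hm', h2⟩ := h'
    exact ⟨n + m, N.add_mem hn hm, n' + m', N.add_mem hn' hm', by
      rw [add_add_add_comm, h1, h2, add_add_add_comm]⟩

instance modConTop {M : Type u} [AddCommMonoid M] [TopologicalSpace M] (N : AddSubmonoid M) :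
    TopologicalSpace (modCon N).Quotient :=
  inferInstanceAs (TopologicalSpace (Quotient (modCon N).toSetoid))

/-- The canonical quotient map `M → M/N`. -/
def modMk {M : Type u} [AddCommMonoid M] (N : AddSubmonoid M) (a : M) : (modCon N).Quotient :=
  Quotient.mk _ a

/-- The subgroup `N⁺ = { q(n, n') : n, n' ∈ N }` of the naive group completion `M⁺`. -/
def gcSubgroup {M : Type u} [AddCommMonoid M] (N : AddSubmonoid M) : AddSubgroup (GC M) where
  carrier := { x | ∃ n ∈ N, ∃ n' ∈ N, x = GC.mk (n, n') }
  zero_mem' := ⟨0, N.zero_mem, 0, N.zero_mem, rfl⟩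
  add_mem' := by
    rintro x y ⟨n, hn, n', hn', rfl⟩ ⟨m, hm, m', hm', rfl⟩
    exact ⟨n + m, N.add_mem hn hm, n' + m', N.add_mem hn' hm', rfl⟩
  neg_mem' := by
    rintro x ⟨n, hn, n', hn', rfl⟩
    exact ⟨n', hn', n, hn, rfl⟩


section AuxProof

variable {M : Type u} [AddCommMonoid M]

theorem GC.mk_eq_mk_of {a b c d : M} (h : a + d = b + c) :
    GC.mk (a, b) = GC.mk (c, d) := by
  have h1 : GC.mk (a, b) = GC.mk (d + a, d + b) := Quot.sound ⟨d, rfl, rfl⟩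
  have h2 : GC.mk (c, d) = GC.mk (b + c, b + d) := Quot.sound ⟨b, rfl, rfl⟩
  rw [h1, h2]
  exact congrArg GC.mk (Prod.ext (by rw [add_comm d a, h]) (add_comm d b))

variable (N : AddSubmonoid M)

/-- The map `M → M⁺/N⁺`, `a ↦ [q(a,0)]`. -/
def gcQmk (a : M) : GC M ⧸ gcSubgroup N := QuotientAddGroup.mk (GC.mk (a, 0))

theorem gcQmk_respects {a b : M} (h : modCon N a b) : gcQmk N a = gcQmk N b := by
  obtain ⟨n, hn, n', hn', hab⟩ := h
  refine (QuotientAddGroup.eq).mpr ?_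
  have : -GC.mk (a, 0) + GC.mk (b, 0) = GC.mk ((n : M), n') := by
    rw [GC.mk_neg, GC.mk_add]
    exact GC.mk_eq_mk_of (by
      show 0 + b + n' = a + 0 + n
      rw [zero_add, add_zero, ← hab, add_comm])
  rw [this]
  exact ⟨n, hn, n', hn', rfl⟩

/-- The map `M/N → M⁺/N⁺` induced by `gcQmk`. -/
def modLift : (modCon N).Quotient → GC M ⧸ gcSubgroup N :=
  Quotient.lift (gcQmk N) (fun _ _ h => gcQmk_respects N h)

theorem modLift_mk (a : M) : modLift N (modMk N a) = gcQmk N a := rfl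

theorem gcQmk_add (a b : M) : gcQmk N (a + b) = gcQmk N a + gcQmk N b := by
  have h : GC.mk (a + b, 0) = GC.mk (a, 0) + GC.mk (b, 0) := by
    rw [GC.mk_add]
    exact congrArg GC.mk (Prod.ext rfl (zero_add 0).symm)
  show QuotientAddGroup.mk (GC.mk (a + b, 0)) = _
  rw [h, QuotientAddGroup.mk_add]
  rfl

theorem modLift_add (x y : (modCon N).Quotient) :
    modLift N (x + y) = modLift N x + modLift N y := by
  induction x using Quotient.ind with | _ a =>
  induction y using Quotient.ind with | _ b =>
  exact gcQmk_add N a b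

/-- The forward map `(M/N)⁺ → M⁺/N⁺`. -/
def gcPhi : GC (modCon N).Quotient → GC M ⧸ gcSubgroup N :=
  Quot.lift (fun p => modLift N p.1 - modLift N p.2) (by
    rintro p q ⟨m, h1, h2⟩
    rw [h1, h2, modLift_add, modLift_add]
    abel)

theorem gcPhi_mk (a b : M) :
    gcPhi N (GC.mk (modMk N a, modMk N b)) = QuotientAddGroup.mk (GC.mk (a, b)) := by
  show gcQmk N a - gcQmk N b = _
  show QuotientAddGroup.mk _ - QuotientAddGroup.mk _ = _
  rw [← QuotientAddGroup.mk_sub]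
  refine congrArg _ ?_
  show GC.mk (a, 0) - GC.mk (b, 0) = GC.mk (a, b)
  rw [sub_eq_add_neg, GC.mk_neg, GC.mk_add]
  exact congrArg GC.mk (Prod.ext (add_zero a) (zero_add b))

theorem gcPhi_add (x y : GC (modCon N).Quotient) :
    gcPhi N (x + y) = gcPhi N x + gcPhi N y := by
  rcases x with ⟨p⟩; rcases y with ⟨q⟩
  show modLift N (p.1 + q.1) - modLift N (p.2 + q.2) = _
  rw [modLift_add, modLift_add]
  show _ = (modLift N p.1 - modLift N p.2) + (modLift N q.1 - modLift N q.2)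
  abel

/-- The map `M⁺ → (M/N)⁺`. -/
def gcRho : GC M → GC (modCon N).Quotient :=
  Quot.map (fun p => (modMk N p.1, modMk N p.2)) (by
    rintro p q ⟨m, h1, h2⟩
    refine ⟨modMk N m, ?_, ?_⟩
    · show modMk N q.1 = modMk N m + modMk N p.1
      rw [h1]; exact AddCon.coe_add m p.1
    · show modMk N q.2 = modMk N m + modMk N p.2
      rw [h2]; exact AddCon.coe_add m p.2)

theorem gcRho_mk (a b : M) : gcRho N (GC.mk (a, b)) = GC.mk (modMk N a, modMk N b) := rfl

/-- `gcRho` as an additive monoid hom. -/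
def gcRhoHom : GC M →+ GC (modCon N).Quotient where
  toFun := gcRho N
  map_zero' := rfl
  map_add' := by
    rintro ⟨p⟩ ⟨q⟩
    exact congrArg (Quot.mk _)
      (Prod.ext (AddCon.coe_add p.1 q.1) (AddCon.coe_add p.2 q.2))

theorem gcRhoHom_ker : gcSubgroup N ≤ (gcRhoHom N).ker := by
  rintro x ⟨n, hn, n', hn', rfl⟩
  show gcRho N (GC.mk ((n : M), n')) = 0
  rw [gcRho_mk]
  show GC.mk (modMk N n, modMk N n') = GC.mk (0, 0)
  have h1 : modMk N n = 0 := Quotient.sound ⟨0, N.zero_mem, n, hn, by rw [add_zero, zero_add]⟩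
  have h2 : modMk N n' = 0 := Quotient.sound ⟨0, N.zero_mem, n', hn', by rw [add_zero, zero_add]⟩
  rw [h1, h2]

/-- The inverse map `M⁺/N⁺ → (M/N)⁺`. -/
def gcPsi : GC M ⧸ gcSubgroup N → GC (modCon N).Quotient :=
  QuotientAddGroup.lift _ (gcRhoHom N) (gcRhoHom_ker N)

theorem gcPsi_mk (a b : M) :
    gcPsi N (QuotientAddGroup.mk (GC.mk (a, b))) = GC.mk (modMk N a, modMk N b) :=
  QuotientAddGroup.lift_mk _ (gcRhoHom_ker N) _

section Top
variable [TopologicalSpace M]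

theorem continuous_gcQmk : Continuous (gcQmk N) :=
  continuous_quotient_mk'.comp (continuous_quot_mk.comp
    (continuous_id.prodMk continuous_const))

theorem continuous_modLift : Continuous (modLift N) :=
  (continuous_gcQmk N).quotient_lift _

theorem continuous_gcPhi [IsTopologicalAddGroup (GC M)] : Continuous (gcPhi N) :=
  continuous_quot_lift _
    (((continuous_modLift N).comp continuous_fst).sub
      ((continuous_modLift N).comp continuous_snd))

theorem continuous_gcRho : Continuous (gcRho N) :=
  continuous_quot_lift _ (continuous_quot_mk.comp
    ((continuous_quotient_mk'.comp continuous_fst).prodMk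
      (continuous_quotient_mk'.comp continuous_snd)))

theorem continuous_gcPsi : Continuous (gcPsi N) := by
  apply continuous_quot_lift
  exact continuous_gcRho N

end Top

end AuxProof

/-- Let `M` be a topological abelian monoid with the cancellation property and
`N ⊆ M` a submonoid.  Suppose the quotient monoid `M/N` (with the quotient topology) is a
topological abelian monoid, the naive group completion `M⁺` is a topological group, and the
subgroup `N⁺ = { q(n, n') : n, n' ∈ N }` of `M⁺` is closed.  Then the canonical group
isomorphism `(M/N)⁺ → M⁺/N⁺` induced by the quotient maps is an isomorphism of topological
groups: there is a homeomorphism which is additive and is compatible with the canonical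
quotient maps. -/
theorem groupCompletion_quotient_iso
    {M : Type u} [AddCancelCommMonoid M] [TopologicalSpace M] [ContinuousAdd M]
    (N : AddSubmonoid M)
    (hMN : ContinuousAdd (modCon N).Quotient)
    (hMplus : IsTopologicalAddGroup (GC M))
    (hNplus : IsClosed ((gcSubgroup N : AddSubgroup (GC M)) : Set (GC M))) :
    ∃ e : GC (modCon N).Quotient ≃ₜ GC M ⧸ gcSubgroup N,
      (∀ x y, e (x + y) = e x + e y) ∧
      ∀ a b : M, e (GC.mk (modMk N a, modMk N b)) = QuotientAddGroup.mk (GC.mk (a, b)) := by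
  haveI := hMplus
  refine ⟨⟨⟨gcPhi N, gcPsi N, ?_, ?_⟩, continuous_gcPhi N, continuous_gcPsi N⟩,
    gcPhi_add N, gcPhi_mk N⟩
  · rintro ⟨⟨x1, x2⟩⟩
    induction x1 using Quotient.ind with | _ a =>
    induction x2 using Quotient.ind with | _ b =>
    show gcPsi N (gcPhi N (GC.mk (modMk N a, modMk N b))) = _
    rw [gcPhi_mk, gcPsi_mk]
    rfl
  · intro y
    induction y using QuotientAddGroup.induction_on with | _ z =>
    rcases z with ⟨⟨a, b⟩⟩
    show gcPhi N (gcPsi N (QuotientAddGroup.mk (GC.mk (a, b)))) = _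
    rw [gcPsi_mk, gcPhi_mk]
    rfl
end

section
/- Let M be a Hausdorff topological abelian monoid with the cancellation property such that the naive group completion M⁺ is a Hausdorff topological group, and let σ: M → M be a continuous monoid involution (an additive monoid homomorphism with σ ∘ σ = id). Let M^σ = { m ∈ M : σ(m) = m } be the fixed submonoid with the subspace topology, and let σ act on M⁺ by σ(q(a, b)) = q(σ(a), σ(b)), with (M⁺)^σ the fixed subgroup with the subspace topology. Then the natural continuous group homomorphism (M^σ)⁺ → (M⁺)^σ, sending q(a, b) with a, b ∈ M^σ to the class q(a, b) in M⁺, is an isomorphism of topological groups. -/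
universe u

/-- The submonoid `M^σ` of elements fixed by the involution `σ`. -/
def fixedSubmonoid {M : Type u} [AddCommMonoid M] (σ : M →+ M) : AddSubmonoid M where
  carrier := { m | σ m = m }
  zero_mem' := map_zero σ
  add_mem' := by
    intro a b ha hb
    simp only [Set.mem_setOf_eq] at *
    rw [map_add, ha, hb]

/-- The subgroup `(M⁺)^σ` of the naive group completion fixed by the induced involution. -/
def fixedGCSubgroup {M : Type u} [AddCommMonoid M] (σ : M →+ M) : AddSubgroup (GC M) where
  carrier := { x | GC.map σ x = x }
  zero_mem' := GC.map_zero' σ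
  add_mem' := by
    intro a b ha hb
    simp only [Set.mem_setOf_eq] at *
    rw [GC.map_add', ha, hb]
  neg_mem' := by
    intro a ha
    simp only [Set.mem_setOf_eq] at *
    rw [GC.map_neg', ha]


section AuxLemmas

open Topology Set

/-- Restriction of a quotient map to the preimage of a closed set is a quotient map. -/
theorem IsQuotientMap.restrictPreimage_isClosed' {X Y : Type*} [TopologicalSpace X]
    [TopologicalSpace Y] {f : X → Y} (hf : Topology.IsQuotientMap f)
    {s : Set Y} (hs : IsClosed s) : Topology.IsQuotientMap (s.restrictPreimage f) := by
  refine isQuotientMap_iff_isClosed.2 ⟨hf.surjective.restrictPreimage _, fun U ↦ ?_⟩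
  rw [hs.isClosedEmbedding_subtypeVal.isClosed_iff_image_isClosed,
    (isQuotientMap_iff_isClosed.1 hf).2 (Subtype.val '' U),
    (hs.preimage hf.continuous).isClosedEmbedding_subtypeVal.isClosed_iff_image_isClosed,
    image_val_preimage_restrictPreimage]

namespace GC

variable {M : Type u}

theorem mk_eq_of [AddCommMonoid M] {p q : M × M} (h : p.1 + q.2 = p.2 + q.1) :
    GC.mk p = GC.mk q := by
  have h1 : GC.mk p = GC.mk (q.1 + p.1, q.1 + p.2) := Quot.sound ⟨q.1, rfl, rfl⟩
  have h2 : GC.mk q = GC.mk (p.1 + q.1, p.1 + q.2) := Quot.sound ⟨p.1, rfl, rfl⟩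
  rw [h1, h2]
  have e1 : q.1 + p.1 = p.1 + q.1 := add_comm _ _
  have e2 : q.1 + p.2 = p.1 + q.2 := by
    calc q.1 + p.2 = p.2 + q.1 := add_comm _ _
      _ = p.1 + q.2 := h.symm
  rw [e1, e2]

theorem eq_of_mk_eq [AddCancelCommMonoid M] {p q : M × M} (h : GC.mk p = GC.mk q) :
    p.1 + q.2 = p.2 + q.1 := by
  have h' : Relation.EqvGen (gcRel M) p q := Quot.eqvGen_exact h
  clear h
  induction h' with
  | rel x y hxy =>
      obtain ⟨m, h1, h2⟩ := hxy
      rw [h1, h2]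
      abel
  | refl x => exact add_comm _ _
  | symm x y _ ih =>
      calc y.1 + x.2 = x.2 + y.1 := add_comm _ _
        _ = x.1 + y.2 := ih.symm
        _ = y.2 + x.1 := add_comm _ _
  | trans x y z _ _ ih1 ih2 =>
      have key : x.1 + z.2 + (y.1 + y.2) = x.2 + z.1 + (y.1 + y.2) := by
        calc x.1 + z.2 + (y.1 + y.2) = (x.1 + y.2) + (y.1 + z.2) := by abel
          _ = (x.2 + y.1) + (y.2 + z.1) := by rw [ih1, ih2]
          _ = x.2 + z.1 + (y.1 + y.2) := by abel
      exact add_right_cancel key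

end GC

end AuxLemmas

/-- Let `M` be a Hausdorff topological abelian monoid with the cancellation
property whose naive group completion `M⁺` is a Hausdorff topological group, and let `σ` be a
continuous monoid involution of `M`.  Then the natural continuous group homomorphism
`(M^σ)⁺ → (M⁺)^σ`, sending `q(a, b)` with `a, b ∈ M^σ` to the class `q(a, b)` in `M⁺`, is an
isomorphism of topological groups. -/
theorem groupCompletion_fixedPoints_iso
    {M : Type u} [AddCancelCommMonoid M] [TopologicalSpace M] [T2Space M] [ContinuousAdd M]
    (hMplus : IsTopologicalAddGroup (GC M)) (hMplusT2 : T2Space (GC M))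
    (σ : M →+ M) (hσcont : Continuous σ) (hσinv : ∀ m, σ (σ m) = m) :
    ∃ e : GC ↥(fixedSubmonoid σ) ≃ₜ ↥(fixedGCSubgroup σ),
      (∀ x y, e (x + y) = e x + e y) ∧
      ∀ a b : ↥(fixedSubmonoid σ),
        (e (GC.mk (a, b)) : GC M) = GC.mk ((a : M), (b : M)) := by
  classical
  -- the underlying map to `GC M`
  let f : ↥(fixedSubmonoid σ) × ↥(fixedSubmonoid σ) → GC M :=
    fun p => GC.mk ((p.1 : M), (p.2 : M))
  have hf : ∀ p q, gcRel ↥(fixedSubmonoid σ) p q → f p = f q := by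
    rintro p q ⟨m, h1, h2⟩
    exact Quot.sound ⟨(m : M), by rw [h1]; rfl, by rw [h2]; rfl⟩
  let T : GC ↥(fixedSubmonoid σ) → GC M := Quot.lift f hf
  -- `GC.map σ` is continuous
  have hmapcont : Continuous (GC.map σ) := by
    apply continuous_quot_lift
    exact continuous_quot_mk.comp ((hσcont.comp continuous_fst).prodMk (hσcont.comp continuous_snd))
  -- `T` lands in the fixed subgroup
  have hmem : ∀ x : GC ↥(fixedSubmonoid σ), T x ∈ fixedGCSubgroup σ := by
    rintro ⟨⟨a, b⟩⟩
    show GC.map σ (GC.mk ((a : M), (b : M))) = GC.mk ((a : M), (b : M))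
    rw [GC.map_mk]
    exact congrArg GC.mk (Prod.ext a.2 b.2)
  let T' : GC ↥(fixedSubmonoid σ) → ↥(fixedGCSubgroup σ) := fun x => ⟨T x, hmem x⟩
  have hinj : Function.Injective T' := by
    rintro ⟨⟨a, b⟩⟩ ⟨⟨c, d⟩⟩ h
    have h' : GC.mk ((a : M), (b : M)) = GC.mk ((c : M), (d : M)) := congrArg Subtype.val h
    have h2 : (a : M) + (d : M) = (b : M) + (c : M) := GC.eq_of_mk_eq h'
    exact GC.mk_eq_of (p := (a, b)) (q := (c, d)) (Subtype.ext h2)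
  have hsurj : Function.Surjective T' := by
    rintro ⟨x, hx⟩
    rcases x with ⟨⟨a, b⟩⟩
    have hx' : GC.mk (σ a, σ b) = GC.mk (a, b) := hx
    have hab : σ a + b = σ b + a := GC.eq_of_mk_eq (p := (σ a, σ b)) (q := (a, b)) hx'
    refine ⟨GC.mk (⟨a + σ b, ?_⟩, ⟨b + σ b, ?_⟩), ?_⟩
    · show σ (a + σ b) = a + σ b
      rw [map_add, hσinv, hab, add_comm]
    · show σ (b + σ b) = b + σ b
      rw [map_add, hσinv, add_comm]
    · refine Subtype.ext ?_
      show GC.mk (a + σ b, b + σ b) = GC.mk (a, b)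
      exact GC.mk_eq_of (p := (a + σ b, b + σ b)) (q := (a, b)) (by show a + σ b + b = b + σ b + a; rw [add_comm b (σ b), add_comm (σ b + b) a, add_assoc])
  let e0 : GC ↥(fixedSubmonoid σ) ≃ ↥(fixedGCSubgroup σ) := Equiv.ofBijective T' ⟨hinj, hsurj⟩
  -- continuity of the forward map
  have hTcont : Continuous T := by
    apply continuous_quot_lift
    exact continuous_quot_mk.comp
      (((continuous_subtype_val.comp continuous_fst)).prodMk
        ((continuous_subtype_val.comp continuous_snd)))
  have hT'cont : Continuous T' := hTcont.subtype_mk _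
  -- the fixed subgroup is closed
  have hFclosed : IsClosed ((fixedGCSubgroup σ : AddSubgroup (GC M)) : Set (GC M)) :=
    isClosed_eq hmapcont continuous_id
  -- the restricted quotient map
  have hqm : Topology.IsQuotientMap
      (((fixedGCSubgroup σ : AddSubgroup (GC M)) : Set (GC M)).restrictPreimage
        (Quot.mk (gcRel M))) :=
    IsQuotientMap.restrictPreimage_isClosed' isQuotientMap_quot_mk hFclosed
  -- the explicit continuous inverse on representatives
  have hA : ∀ p : ↥(Quot.mk (gcRel M) ⁻¹' ((fixedGCSubgroup σ : AddSubgroup (GC M)) : Set (GC M))),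
      σ (p.1.1 + σ p.1.2) = p.1.1 + σ p.1.2 ∧ σ (p.1.2 + σ p.1.2) = p.1.2 + σ p.1.2 := by
    rintro ⟨⟨a, b⟩, hp⟩
    have hx' : GC.mk (σ a, σ b) = GC.mk (a, b) := hp
    have hab : σ a + b = σ b + a := GC.eq_of_mk_eq (p := (σ a, σ b)) (q := (a, b)) hx'
    constructor
    · show σ (a + σ b) = a + σ b
      rw [map_add, hσinv, hab, add_comm]
    · show σ (b + σ b) = b + σ b
      rw [map_add, hσinv, add_comm]
  let v : ↥(Quot.mk (gcRel M) ⁻¹' ((fixedGCSubgroup σ : AddSubgroup (GC M)) : Set (GC M))) →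
      GC ↥(fixedSubmonoid σ) :=
    fun p => GC.mk (⟨p.1.1 + σ p.1.2, (hA p).1⟩, ⟨p.1.2 + σ p.1.2, (hA p).2⟩)
  have hvcont : Continuous v := by
    apply continuous_quot_mk.comp
    refine Continuous.prodMk (Continuous.subtype_mk ?_ _) (Continuous.subtype_mk ?_ _)
    · exact ((continuous_fst.comp continuous_subtype_val)).add
        (hσcont.comp (continuous_snd.comp continuous_subtype_val))
    · exact ((continuous_snd.comp continuous_subtype_val)).add
        (hσcont.comp (continuous_snd.comp continuous_subtype_val))
  have hsymmcont : Continuous (e0.symm : ↥(fixedGCSubgroup σ) → GC ↥(fixedSubmonoid σ)) := by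
    rw [hqm.continuous_iff]
    have heq : (e0.symm : ↥(fixedGCSubgroup σ) → GC ↥(fixedSubmonoid σ)) ∘
        (((fixedGCSubgroup σ : AddSubgroup (GC M)) : Set (GC M)).restrictPreimage
          (Quot.mk (gcRel M))) = v := by
      funext p
      show e0.symm ⟨Quot.mk (gcRel M) p.1, p.2⟩ = v p
      rw [Equiv.symm_apply_eq]
      refine Subtype.ext ?_
      show GC.mk p.1 = GC.mk ((p.1.1 + σ p.1.2 : M), (p.1.2 + σ p.1.2 : M))
      exact GC.mk_eq_of (p := p.1) (q := (p.1.1 + σ p.1.2, p.1.2 + σ p.1.2)) (by exact add_left_comm _ _ _)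
    rw [heq]
    exact hvcont
  refine ⟨{ toEquiv := e0, continuous_toFun := hT'cont, continuous_invFun := hsymmcont }, ?_, ?_⟩
  · rintro ⟨p⟩ ⟨q⟩
    refine Subtype.ext ?_
    show T (GC.mk p + GC.mk q) = (T' (GC.mk p) : GC M) + (T' (GC.mk q) : GC M)
    show GC.mk (((p.1 + q.1 : ↥(fixedSubmonoid σ)) : M), ((p.2 + q.2 : ↥(fixedSubmonoid σ)) : M))
        = GC.mk ((p.1 : M), (p.2 : M)) + GC.mk ((q.1 : M), (q.2 : M))
    rw [GC.mk_add]
    norm_cast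
  · intro a b
    rfl
end

section
/- Let M be a topological abelian monoid with the cancellation property. Suppose that the naive group completion M⁺ is a topological group and that the subgroup 2M⁺ = { x + x : x ∈ M⁺ } is closed in M⁺. Then the canonical map M/2M → M⁺/2M⁺, sending the class of m to the class of q(m, 0), is an isomorphism of topological abelian groups, where 2M = { m + m : m ∈ M } ⊆ M, the quotient monoid M/2M carries the quotient topology (and is a group, since every element is its own inverse), and M⁺/2M⁺ is the quotient topological group. -/
universe u

/-- The submonoid `2M = { m + m : m ∈ M }`. -/
def twoSubmonoid (M : Type u) [AddCommMonoid M] : AddSubmonoid M where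
  carrier := { x | ∃ m, x = m + m }
  zero_mem' := ⟨0, (add_zero 0).symm⟩
  add_mem' := by
    rintro a b ⟨m, rfl⟩ ⟨n, rfl⟩
    exact ⟨m + n, add_add_add_comm m m n n⟩

/-- The subgroup `2M⁺ = { x + x : x ∈ M⁺ }` of the naive group completion. -/
def twoGCSubgroup (M : Type u) [AddCommMonoid M] : AddSubgroup (GC M) where
  carrier := { y | ∃ x, y = x + x }
  zero_mem' := ⟨0, (add_zero 0).symm⟩
  add_mem' := by
    rintro a b ⟨x, rfl⟩ ⟨y, rfl⟩
    exact ⟨x + y, add_add_add_comm x x y y⟩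
  neg_mem' := by
    rintro a ⟨x, rfl⟩
    exact ⟨-x, by rw [neg_add]⟩

section Aux

variable {M : Type u} [AddCommMonoid M]

/-- The map `M → M⁺/2M⁺`, `m ↦ [q(m,0)]`. -/
def fAux (m : M) : GC M ⧸ twoGCSubgroup M := QuotientAddGroup.mk (GC.mk (m, 0))

theorem fAux_resp (a b : M) (h : (modCon (twoSubmonoid M)) a b) : fAux a = fAux b := by
  obtain ⟨n, ⟨c, rfl⟩, n', ⟨d, rfl⟩, hab⟩ := h
  refine QuotientAddGroup.eq.mpr ⟨GC.mk (c, d), ?_⟩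
  show GC.mk (0 + b, a + 0) = GC.mk (c + c, d + d)
  calc GC.mk ((0 : M) + b, a + 0)
      = GC.mk (b, a) := congrArg GC.mk (Prod.ext (zero_add b) (add_zero a))
    _ = GC.mk ((c + c) + b, (c + c) + a) := Quot.sound ⟨c + c, rfl, rfl⟩
    _ = GC.mk (b + (c + c), b + (d + d)) := by
        refine congrArg GC.mk (Prod.ext (add_comm _ _) ?_)
        rw [add_comm (c + c) a, hab, add_comm]
    _ = GC.mk (c + c, d + d) := (Quot.sound ⟨b, rfl, rfl⟩).symm

/-- The map `M⁺ → M/2M`, `q(a,b) ↦ [a + b]`. -/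
def gAux : GC M → (modCon (twoSubmonoid M)).Quotient :=
  Quot.lift (fun p => modMk (twoSubmonoid M) (p.1 + p.2)) (by
    rintro p q ⟨m, h1, h2⟩
    refine Quotient.sound ?_
    refine ⟨m + m, ⟨m, rfl⟩, 0, (twoSubmonoid M).zero_mem, ?_⟩
    rw [h1, h2, add_zero]
    show p.1 + p.2 + (m + m) = m + p.1 + (m + p.2)
    rw [add_add_add_comm m p.1 m p.2, add_comm (m + m)])

theorem gAux_resp (x y : GC M) (h : y - x ∈ twoGCSubgroup M) : gAux x = gAux y := by
  obtain ⟨z, hz⟩ := h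
  have hy : y = x + (z + z) := by rw [← hz]; abel
  subst hy
  rcases x with ⟨p⟩
  rcases z with ⟨r⟩
  refine Quotient.sound ?_
  refine ⟨r.1 + r.1 + (r.2 + r.2), (twoSubmonoid M).add_mem ⟨r.1, rfl⟩ ⟨r.2, rfl⟩,
    0, (twoSubmonoid M).zero_mem, ?_⟩
  show p.1 + p.2 + (r.1 + r.1 + (r.2 + r.2)) = p.1 + (r.1 + r.1) + (p.2 + (r.2 + r.2)) + 0
  rw [add_zero]
  abel

end Aux

/-- Let `M` be a topological abelian monoid with the cancellation property
such that the naive group completion `M⁺` is a topological group and the subgroup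
`2M⁺ = { x + x : x ∈ M⁺ }` is closed.  Then the canonical map `M/2M → M⁺/2M⁺`, sending the
class of `m` to the class of `q(m, 0)`, is an isomorphism of topological abelian groups. -/
theorem mod_two_iso
    {M : Type u} [AddCancelCommMonoid M] [TopologicalSpace M] [ContinuousAdd M]
    (hMplus : IsTopologicalAddGroup (GC M))
    (h2cl : IsClosed ((twoGCSubgroup M : AddSubgroup (GC M)) : Set (GC M))) :
    ∃ e : (modCon (twoSubmonoid M)).Quotient ≃ₜ GC M ⧸ twoGCSubgroup M,
      (∀ x y, e (x + y) = e x + e y) ∧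
      ∀ m : M, e (modMk (twoSubmonoid M) m) = QuotientAddGroup.mk (GC.mk (m, 0)) := by
  classical
  -- forward map
  let F : (modCon (twoSubmonoid M)).Quotient → GC M ⧸ twoGCSubgroup M :=
    Quotient.lift fAux fAux_resp
  -- backward map
  let G : GC M ⧸ twoGCSubgroup M → (modCon (twoSubmonoid M)).Quotient :=
    Quotient.lift gAux (fun x y h => gAux_resp x y (by
      rw [sub_eq_neg_add]
      exact (QuotientAddGroup.leftRel_apply).mp h))
  have hFG : ∀ y, F (G y) = y := by
    refine Quotient.ind ?_
    refine Quot.ind ?_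
    intro p
    show fAux (p.1 + p.2) = QuotientAddGroup.mk (GC.mk p)
    refine QuotientAddGroup.eq.mpr ⟨GC.mk (0, p.2), ?_⟩
    show GC.mk (0 + p.1, (p.1 + p.2) + p.2) = GC.mk (0 + 0, p.2 + p.2)
    calc GC.mk ((0 : M) + p.1, (p.1 + p.2) + p.2)
        = GC.mk (p.1 + (0 + 0), p.1 + (p.2 + p.2)) := by
          refine congrArg GC.mk (Prod.ext ?_ ?_)
          · rw [zero_add, add_zero, add_zero]
          · rw [add_assoc]
      _ = GC.mk (0 + 0, p.2 + p.2) := (Quot.sound ⟨p.1, rfl, rfl⟩).symm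
  have hGF : ∀ x, G (F x) = x := by
    refine Quotient.ind ?_
    intro m
    show modMk (twoSubmonoid M) (m + 0) = modMk (twoSubmonoid M) m
    rw [add_zero]
  refine ⟨⟨⟨F, G, hGF, hFG⟩, ?_, ?_⟩, ?_, fun m => rfl⟩
  · -- continuity of F
    refine Continuous.quotient_lift ?_ _
    show Continuous fun m : M => QuotientAddGroup.mk (GC.mk (m, 0))
    exact continuous_quot_mk.comp (continuous_quot_mk.comp
      (continuous_id.prodMk continuous_const))
  · -- continuity of G
    refine Continuous.quotient_lift ?_ _
    refine continuous_quot_lift _ ?_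
    exact continuous_quotient_mk'.comp (continuous_fst.add continuous_snd)
  · -- additivity
    refine Quotient.ind fun a => Quotient.ind fun b => ?_
    show fAux (a + b) = fAux a + fAux b
    show QuotientAddGroup.mk (GC.mk (a + b, 0))
        = QuotientAddGroup.mk (GC.mk (a, 0) + GC.mk (b, 0))
    refine congrArg _ ?_
    exact congrArg GC.mk (Prod.ext rfl (zero_add 0).symm)
end
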